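/- Let μ be a probability measure on ℝ with characteristic function φ(t) = ∫ e^{itx} dμ(x) and cumulative distribution function F(x) = μ((−∞, x]). Then for every x ∈ ℝ at which F is continuous, F(x) = 1/2 − (1/π) · lim_{T→∞} ∫_{1/T}^{T} Im(e^{−itx} φ(t))/t dt, i.e. the function T ↦ ∫_{t ∈ [1/T, T]} Im(e^{−itx} φ(t))/t dt tends to π(1/2 − F(x)) as T → ∞. -/

import Mathlib

open MeasureTheory Filter Real Set intervalIntegral Topology

lemma gp_hasDeriv (s : ℝ) (t : ℝ) :
    HasDerivAt (fun t : ℝ => -(Real.exp (-s*t) * (s * Real.sin t + Real.cos t)) / (1+s^2))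
      (Real.exp (-s*t) * Real.sin t) t := by
  have h1 : HasDerivAt (fun t : ℝ => Real.exp (-s*t)) (-s * Real.exp (-s*t)) t := by
    simpa [mul_comm] using ((hasDerivAt_id t).const_mul (-s)).exp
  have h2 : HasDerivAt (fun t : ℝ => s * Real.sin t + Real.cos t)
      (s * Real.cos t + (-Real.sin t)) t :=
    ((Real.hasDerivAt_sin t).const_mul s).add (Real.hasDerivAt_cos t)
  have h3 := (h1.mul h2).neg.div_const (1+s^2)
  refine h3.congr_deriv ?_
  have hs : (1:ℝ) + s^2 ≠ 0 := by positivity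
  rw [div_eq_iff hs]
  ring

lemma gp_laplace (s : ℝ) (T : ℝ) :
    ∫ t in (0:ℝ)..T, Real.exp (-s*t) * Real.sin t
      = (1 - Real.exp (-s*T) * (s * Real.sin T + Real.cos T)) / (1+s^2) := by
  have h := intervalIntegral.integral_eq_sub_of_hasDerivAt (a := 0) (b := T)
    (f := fun t : ℝ => -(Real.exp (-s*t) * (s * Real.sin t + Real.cos t)) / (1+s^2))
    (fun t _ => gp_hasDeriv s t)
    (by apply Continuous.intervalIntegrable; continuity)
  rw [h]
  simp only [mul_zero, neg_zero, Real.exp_zero, Real.sin_zero, Real.cos_zero, mul_zero]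
  ring

lemma gp_exp_int {t : ℝ} (ht : 0 < t) :
    ∫ s in Ioi (0:ℝ), Real.exp (-s*t) = 1/t := by
  have := integral_comp_mul_left_Ioi (fun u => Real.exp (-u)) 0 ht
  simp only [mul_zero, integral_exp_neg_Ioi, neg_zero, Real.exp_zero, smul_eq_mul, mul_one] at this
  calc ∫ s in Ioi (0:ℝ), Real.exp (-s*t) = ∫ s in Ioi (0:ℝ), Real.exp (-(t*s)) := by
        congr 1; ext s; ring_nf
    _ = 1/t := by rw [this, one_div]

lemma gp_fubini {T : ℝ} (hT : 0 ≤ T) :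
    ∫ t in (0:ℝ)..T, Real.sin t / t
      = ∫ s in Ioi (0:ℝ), (1 - Real.exp (-s*T) * (s * Real.sin T + Real.cos T)) / (1+s^2) := by
  have hcont : Continuous (fun p : ℝ × ℝ => Real.exp (-p.2 * p.1) * Real.sin p.1) :=
    (Real.continuous_exp.comp ((continuous_snd.neg).mul continuous_fst)).mul
      (Real.continuous_sin.comp continuous_fst)
  set M : Measure (ℝ × ℝ) := (volume.restrict (Ioc (0:ℝ) T)).prod (volume.restrict (Ioi (0:ℝ)))
    with hM
  have hmeas : AEStronglyMeasurable (fun p : ℝ × ℝ => Real.exp (-p.2 * p.1) * Real.sin p.1) M :=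
    hcont.aestronglyMeasurable
  have hnorm : ∀ {t : ℝ}, 0 < t →
      (∫ s in Ioi (0:ℝ), ‖Real.exp (-s*t) * Real.sin t‖) = (1/t) * |Real.sin t| := by
    intro t ht0
    have : (fun s : ℝ => ‖Real.exp (-s*t) * Real.sin t‖)
        = fun s : ℝ => Real.exp (-s*t) * |Real.sin t| := by
      ext s; rw [norm_mul, Real.norm_eq_abs, Real.abs_exp, Real.norm_eq_abs]
    rw [this, MeasureTheory.integral_mul_const, gp_exp_int ht0]
  have hint : Integrable (fun p : ℝ × ℝ => Real.exp (-p.2 * p.1) * Real.sin p.1) M := by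
    rw [hM, MeasureTheory.integrable_prod_iff hmeas]
    constructor
    · filter_upwards [ae_restrict_mem measurableSet_Ioc] with t ht
      have h1 : IntegrableOn (fun s : ℝ => Real.exp (-t*s)) (Ioi 0) :=
        exp_neg_integrableOn_Ioi 0 ht.1
      have h2 := h1.mul_const (Real.sin t)
      refine h2.congr ?_
      filter_upwards with s
      ring_nf
    · have hb : ∀ᵐ t ∂(volume.restrict (Ioc (0:ℝ) T)),
          ‖∫ s in Ioi (0:ℝ), ‖Real.exp (-s*t) * Real.sin t‖‖ ≤ 1 := by
        filter_upwards [ae_restrict_mem measurableSet_Ioc] with t ht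
        have ht0 : 0 < t := ht.1
        rw [Real.norm_eq_abs, hnorm ht0, abs_of_nonneg (by positivity)]
        rw [div_mul_eq_mul_div, one_mul, div_le_one ht0]
        calc |Real.sin t| ≤ |t| := Real.abs_sin_le_abs
          _ = t := abs_of_pos ht0
      refine Integrable.mono' (integrable_const 1) ?_ hb
      exact hmeas.norm.integral_prod_right'
  have hswap := MeasureTheory.integral_integral_swap
    (f := fun t s : ℝ => Real.exp (-s*t) * Real.sin t)
    (μ := volume.restrict (Ioc (0:ℝ) T)) (ν := volume.restrict (Ioi (0:ℝ))) hint
  rw [intervalIntegral.integral_of_le hT]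
  have hL : ∫ t in Ioc (0:ℝ) T, Real.sin t / t
      = ∫ t in Ioc (0:ℝ) T, ∫ s in Ioi (0:ℝ), Real.exp (-s*t) * Real.sin t := by
    refine setIntegral_congr_ae measurableSet_Ioc ?_
    filter_upwards with t ht
    rw [MeasureTheory.integral_mul_const, gp_exp_int ht.1]
    ring
  rw [hL, hswap]
  refine setIntegral_congr_ae measurableSet_Ioi ?_
  filter_upwards with s _
  rw [← intervalIntegral.integral_of_le hT, gp_laplace]

lemma gp_err_bound (s T : ℝ) (hs : 0 ≤ s) :
    |Real.exp (-s*T) * (s * Real.sin T + Real.cos T) / (1+s^2)| ≤ 2 * Real.exp (-s*T) := by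
  have h1 : |s * Real.sin T + Real.cos T| ≤ s + 1 := by
    calc |s * Real.sin T + Real.cos T| ≤ |s * Real.sin T| + |Real.cos T| := abs_add_le _ _
      _ ≤ s * 1 + 1 := by
          gcongr
          · rw [abs_mul, abs_of_nonneg hs]
            gcongr; exact Real.abs_sin_le_one T
          · exact Real.abs_cos_le_one T
      _ = s + 1 := by ring
  have h2 : (0:ℝ) < 1 + s^2 := by positivity
  rw [abs_div, abs_mul, Real.abs_exp, abs_of_pos h2, div_le_iff₀ h2]
  have h3 : s + 1 ≤ 2 * (1 + s^2) := by nlinarith [sq_nonneg (s - 1), sq_nonneg s]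
  calc Real.exp (-s*T) * |s * Real.sin T + Real.cos T| ≤ Real.exp (-s*T) * (2 * (1+s^2)) := by
        gcongr; exact h1.trans h3
    _ = 2 * Real.exp (-s*T) * (1 + s^2) := by ring

lemma gp_err_integrable {T : ℝ} (hT : 0 < T) :
    IntegrableOn (fun s : ℝ => Real.exp (-s*T) * (s * Real.sin T + Real.cos T) / (1+s^2))
      (Ioi (0:ℝ)) := by
  refine integrable_of_isBigO_exp_neg (b := T) hT ?_ ?_
  · apply Continuous.continuousOn
    have h2 : ∀ s : ℝ, (1:ℝ) + s^2 ≠ 0 := fun s => by positivity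
    exact ((Real.continuous_exp.comp (continuous_id.neg.mul continuous_const)).mul
      (by continuity)).div (by continuity) h2
  · rw [Asymptotics.isBigO_iff]
    refine ⟨2, ?_⟩
    filter_upwards [eventually_ge_atTop (0:ℝ)] with s hs
    rw [Real.norm_eq_abs, Real.norm_eq_abs, Real.abs_exp, show -T*s = -s*T by ring]
    exact gp_err_bound s T hs

lemma gp_I_eq {T : ℝ} (hT : 0 < T) :
    ∫ s in Ioi (0:ℝ), (1 - Real.exp (-s*T) * (s * Real.sin T + Real.cos T)) / (1+s^2)
      = π/2 - ∫ s in Ioi (0:ℝ), Real.exp (-s*T) * (s * Real.sin T + Real.cos T) / (1+s^2) := by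
  have h1 : IntegrableOn (fun s : ℝ => (1 + s^2)⁻¹) (Ioi (0:ℝ)) :=
    integrable_inv_one_add_sq.integrableOn
  have heq : ∀ s : ℝ, (1 - Real.exp (-s*T) * (s * Real.sin T + Real.cos T)) / (1+s^2)
      = (1 + s^2)⁻¹ - Real.exp (-s*T) * (s * Real.sin T + Real.cos T) / (1+s^2) := by
    intro s; rw [sub_div, one_div]
  simp_rw [heq]
  rw [integral_sub h1 (gp_err_integrable hT), integral_Ioi_inv_one_add_sq, Real.arctan_zero,
    sub_zero]

lemma gp_err_tendsto :
    Tendsto (fun T : ℝ => ∫ s in Ioi (0:ℝ),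
        Real.exp (-s*T) * (s * Real.sin T + Real.cos T) / (1+s^2))
      atTop (𝓝 0) := by
  have key : Tendsto (fun T : ℝ => ∫ s in Ioi (0:ℝ),
      Real.exp (-s*T) * (s * Real.sin T + Real.cos T) / (1+s^2))
      atTop (𝓝 (∫ s in Ioi (0:ℝ), (0:ℝ))) := by
    refine MeasureTheory.tendsto_integral_filter_of_dominated_convergence
      (bound := fun s => 2 * Real.exp (-s)) ?_ ?_ ?_ ?_
    · filter_upwards with T
      apply Continuous.aestronglyMeasurable
      have h2 : ∀ s : ℝ, (1:ℝ) + s^2 ≠ 0 := fun s => by positivity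
      exact ((Real.continuous_exp.comp (continuous_id.neg.mul continuous_const)).mul
        (by continuity)).div (by continuity) h2
    · filter_upwards [eventually_ge_atTop (1:ℝ)] with T hT
      filter_upwards [ae_restrict_mem measurableSet_Ioi] with s hs
      rw [Real.norm_eq_abs]
      calc |Real.exp (-s*T) * (s * Real.sin T + Real.cos T) / (1+s^2)|
          ≤ 2 * Real.exp (-s*T) := gp_err_bound s T (le_of_lt hs)
        _ ≤ 2 * Real.exp (-s) := by
            gcongr
            have hs' : 0 < s := hs
            nlinarith
    · have := (exp_neg_integrableOn_Ioi 0 one_pos).const_mul 2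
      refine this.congr ?_
      filter_upwards with s
      rw [neg_one_mul]
    · filter_upwards [ae_restrict_mem measurableSet_Ioi] with s hs
      have hexp : Tendsto (fun T : ℝ => Real.exp (-s*T)) atTop (𝓝 0) :=
        Real.tendsto_exp_atBot.comp (tendsto_id.const_mul_atTop_of_neg (neg_neg_iff_pos.2 hs))
      refine squeeze_zero_norm (fun T => ?_) (by simpa using hexp.const_mul 2)
      rw [Real.norm_eq_abs]
      simpa [neg_mul] using gp_err_bound s T (le_of_lt hs)
  simpa using key

lemma gp_dirichlet :
    Tendsto (fun T : ℝ => ∫ t in (0:ℝ)..T, Real.sin t / t) atTop (𝓝 (π/2)) := by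
  have h1 : Tendsto (fun T : ℝ => π/2 - ∫ s in Ioi (0:ℝ),
      Real.exp (-s*T) * (s * Real.sin T + Real.cos T) / (1+s^2)) atTop (𝓝 (π/2)) := by
    simpa using (tendsto_const_nhds (x := π/2)).sub gp_err_tendsto
  refine Tendsto.congr' ?_ h1
  filter_upwards [eventually_gt_atTop (0:ℝ)] with T hT
  rw [← gp_I_eq hT, ← gp_fubini hT.le]


lemma gp_sinc_bound (t : ℝ) : |Real.sin t / t| ≤ 1 := by
  rcases eq_or_ne t 0 with h | h
  · simp [h]
  · rw [abs_div, div_le_one (abs_pos.2 h)]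
    exact Real.abs_sin_le_abs

lemma gp_sinc_meas : Measurable (fun t : ℝ => Real.sin t / t) :=
  Real.measurable_sin.div measurable_id

lemma gp_sinc_ii (a b : ℝ) : IntervalIntegrable (fun t : ℝ => Real.sin t / t) volume a b := by
  refine (_root_.intervalIntegrable_const (E := ℝ) (c := (1:ℝ))).mono_fun
    gp_sinc_meas.aestronglyMeasurable.restrict ?_
  filter_upwards with t
  rw [Real.norm_eq_abs, Real.norm_eq_abs, abs_one]
  exact gp_sinc_bound t

noncomputable def gpS : ℝ → ℝ := fun T => ∫ t in (0:ℝ)..T, Real.sin t / t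

lemma gpS_cont : Continuous gpS :=
  intervalIntegral.continuous_primitive (fun a b => gp_sinc_ii a b) 0

lemma gpS_bound : ∃ C : ℝ, 0 ≤ C ∧ ∀ T : ℝ, 0 ≤ T → |gpS T| ≤ C := by
  have h := gp_dirichlet
  rw [Metric.tendsto_atTop] at h
  obtain ⟨T₀, hT₀⟩ := h 1 one_pos
  set T₁ := max T₀ 0 with hT₁
  obtain ⟨C, hC⟩ := (isCompact_Icc (a := (0:ℝ)) (b := T₁)).exists_bound_of_continuousOn
    gpS_cont.continuousOn
  refine ⟨max (max C (|π/2| + 1)) 0, le_max_right _ _, fun T hT => ?_⟩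
  rcases le_total T T₁ with hle | hle
  · have := hC T ⟨hT, hle⟩
    rw [Real.norm_eq_abs] at this
    exact this.trans ((le_max_left _ _).trans (le_max_left _ _))
  · have h2 := hT₀ T ((le_max_left T₀ 0).trans hle)
    rw [Real.dist_eq] at h2
    have h2' : |gpS T - π/2| < 1 := h2
    have : |gpS T| ≤ |π/2| + 1 := by
      have h3 := abs_sub_abs_le_abs_sub (gpS T) (π/2)
      linarith
    exact this.trans ((le_max_right _ _).trans (le_max_left _ _))

lemma gpS_scale {a : ℝ} (ha : a ≠ 0) (u v : ℝ) :
    ∫ t in u..v, Real.sin (a*t) / t = a⁻¹ * (a * (gpS (a*v) - gpS (a*u))) := by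
  have h1 : ∀ t : ℝ, Real.sin (a*t) / t = a * (Real.sin (a*t) / (a*t)) := by
    intro t
    rcases eq_or_ne t 0 with h | h
    · simp [h]
    · field_simp
  simp_rw [h1]
  rw [intervalIntegral.integral_const_mul]
  rw [intervalIntegral.integral_comp_mul_left (fun t => Real.sin t / t) ha]
  rw [smul_eq_mul]
  have h2 : ∫ t in (a*u)..(a*v), Real.sin t / t = gpS (a*v) - gpS (a*u) := by
    unfold gpS
    rw [← intervalIntegral.integral_interval_sub_left (gp_sinc_ii 0 (a*v)) (gp_sinc_ii 0 (a*u))]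
  rw [h2]; ring

lemma gpS_scale' {a : ℝ} (ha : a ≠ 0) (u v : ℝ) :
    ∫ t in u..v, Real.sin (a*t) / t = gpS (a*v) - gpS (a*u) := by
  rw [gpS_scale ha u v]; field_simp

noncomputable def gpsgn (a : ℝ) : ℝ := if 0 < a then π/2 else if a < 0 then -(π/2) else 0

lemma gpS_zero : gpS 0 = 0 := intervalIntegral.integral_same

lemma gp_neg_case {a : ℝ} (u v : ℝ) :
    ∫ t in u..v, Real.sin (a*t) / t = -(∫ t in u..v, Real.sin ((-a)*t) / t) := by
  rw [← intervalIntegral.integral_neg]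
  congr 1; ext t
  rw [neg_mul, Real.sin_neg]; ring

lemma gp_glimit (a : ℝ) :
    Tendsto (fun T : ℝ => ∫ t in (1/T)..T, Real.sin (a*t) / t) atTop (𝓝 (gpsgn a)) := by
  have key : ∀ b : ℝ, 0 < b →
      Tendsto (fun T : ℝ => ∫ t in (1/T)..T, Real.sin (b*t) / t) atTop (𝓝 (π/2)) := by
    intro b hb
    have h1 : Tendsto (fun T : ℝ => gpS (b*T)) atTop (𝓝 (π/2)) := by
      have hbt : Tendsto (fun T : ℝ => b*T) atTop atTop :=
        Filter.tendsto_id.const_mul_atTop hb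
      exact gp_dirichlet.comp hbt
    have h2 : Tendsto (fun T : ℝ => gpS (b*(1/T))) atTop (𝓝 0) := by
      have hbt : Tendsto (fun T : ℝ => b*(1/T)) atTop (𝓝 0) := by
        simp only [one_div]
        simpa using tendsto_inv_atTop_zero.const_mul b
      simpa [gpS_zero, Function.comp_def] using (gpS_cont.tendsto 0).comp hbt
    have h3 := h1.sub h2
    rw [sub_zero] at h3
    refine Tendsto.congr' ?_ h3
    filter_upwards [eventually_gt_atTop (0:ℝ)] with T hT
    exact (gpS_scale' hb.ne' (1/T) T).symm
  unfold gpsgn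
  rcases lt_trichotomy 0 a with h | h | h
  · rw [if_pos h]; exact key a h
  · simp only [← h, lt_irrefl, if_false, zero_mul, Real.sin_zero, zero_div,
      intervalIntegral.integral_zero]
    exact tendsto_const_nhds
  · rw [if_neg (by linarith), if_pos h]
    refine Tendsto.congr' ?_ ((key (-a) (by linarith)).neg)
    filter_upwards with T
    exact (gp_neg_case (1/T) T).symm


lemma gp_cdf_facts (μ : Measure ℝ) [IsProbabilityMeasure μ]
    (F : ℝ → ℝ) (hF : ∀ x : ℝ, F x = (μ (Iic x)).toReal)
    (x : ℝ) (hcont : ContinuousAt F x) :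
    (μ (Iio x)).toReal = F x ∧ (μ (Ioi x)).toReal = 1 - F x := by
  have hfin : ∀ s : Set ℝ, μ s ≠ ⊤ := fun s => (measure_lt_top μ s).ne
  have hIio : (μ (Iio x)).toReal = F x := by
    set seq : ℕ → ℝ := fun n => x - 1/(n+1) with hseq
    have hmono : Monotone (fun n => Iic (seq n)) := by
      intro m n hmn
      apply Iic_subset_Iic.2
      have : (1:ℝ)/(n+1) ≤ 1/(m+1) := by
        apply one_div_le_one_div_of_le (by positivity)
        exact_mod_cast Nat.add_le_add_right hmn 1
      simp only [hseq]; linarith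
    have hunion : (⋃ n, Iic (seq n)) = Iio x := by
      ext y
      simp only [mem_iUnion, mem_Iic, mem_Iio]
      constructor
      · rintro ⟨n, hn⟩
        have : (0:ℝ) < 1/(n+1) := by positivity
        simp only [hseq] at hn; linarith
      · intro hy
        obtain ⟨n, hn⟩ := exists_nat_one_div_lt (sub_pos.2 hy)
        exact ⟨n, by simp only [hseq]; linarith⟩
    have h1 : Tendsto (fun n => μ (Iic (seq n))) atTop (𝓝 (μ (Iio x))) := by
      have := tendsto_measure_iUnion_atTop (μ := μ) hmono
      rwa [hunion] at this
    have h2 : Tendsto (fun n => (μ (Iic (seq n))).toReal) atTop (𝓝 ((μ (Iio x)).toReal)) :=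
      (ENNReal.tendsto_toReal (hfin _)).comp h1
    have h3 : Tendsto (fun n => F (seq n)) atTop (𝓝 (F x)) := by
      apply hcont.tendsto.comp
      have : Tendsto seq atTop (𝓝 (x - 0)) := by
        apply (tendsto_const_nhds (x := x)).sub
        exact tendsto_one_div_add_atTop_nhds_zero_nat
      simpa using this
    have h4 : Tendsto (fun n => F (seq n)) atTop (𝓝 ((μ (Iio x)).toReal)) := by
      refine h2.congr fun n => ?_
      rw [hF]
    exact tendsto_nhds_unique h4 h3
  refine ⟨hIio, ?_⟩
  have hcompl : μ (Iic x) + μ (Ioi x) = 1 := by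
    rw [← measure_univ (μ := μ), ← Iic_union_Ioi (a := x)]
    exact (measure_union (Iic_disjoint_Ioi le_rfl) measurableSet_Ioi).symm
  have := congrArg ENNReal.toReal hcompl
  rw [ENNReal.toReal_add (hfin _) (hfin _), ENNReal.toReal_one] at this
  rw [hF] at *
  linarith

lemma gp_pointmass (μ : Measure ℝ) [IsProbabilityMeasure μ]
    (F : ℝ → ℝ) (hF : ∀ x : ℝ, F x = (μ (Iic x)).toReal)
    (x : ℝ) (hcont : ContinuousAt F x) : μ {x} = 0 := by
  have h := (gp_cdf_facts μ F hF x hcont).1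
  have hfin : ∀ s : Set ℝ, μ s ≠ ⊤ := fun s => (measure_lt_top μ s).ne
  have hsplit : μ (Iic x) = μ (Iio x) + μ {x} := by
    rw [← Iio_union_right (a := x)]
    exact measure_union (by simp) (measurableSet_singleton x)
  have := congrArg ENNReal.toReal hsplit
  rw [ENNReal.toReal_add (hfin _) (hfin _), h, ← hF] at this
  have h0 : (μ {x}).toReal = 0 := by linarith
  exact (ENNReal.toReal_eq_zero_iff _).1 h0 |>.resolve_right (hfin _)

lemma gp_sgn_integral (μ : Measure ℝ) [IsProbabilityMeasure μ] (x : ℝ) :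
    ∫ y, gpsgn (y - x) ∂μ
      = π/2 * (μ (Ioi x)).toReal - π/2 * (μ (Iio x)).toReal := by
  have heq : ∀ y : ℝ, gpsgn (y - x)
      = Set.indicator (Ioi x) (fun _ => π/2) y + Set.indicator (Iio x) (fun _ => -(π/2)) y := by
    intro y
    unfold gpsgn
    rcases lt_trichotomy x y with h | h | h
    · rw [indicator_of_mem (mem_Ioi.2 h), indicator_of_notMem (by simp [not_lt.2 h.le]),
        if_pos (by linarith)]
      simp
    · rw [indicator_of_notMem (by simp [h]), indicator_of_notMem (by simp [h]),
        if_neg (by rw [← h]; simp), if_neg (by rw [← h]; simp)]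
      simp
    · rw [indicator_of_notMem (by simp [not_lt.2 h.le]), indicator_of_mem (mem_Iio.2 h),
        if_neg (by linarith), if_pos (by linarith)]
      simp
  simp_rw [heq]
  rw [MeasureTheory.integral_add]
  · rw [integral_indicator_const _ measurableSet_Ioi, integral_indicator_const _ measurableSet_Iio]
    simp only [smul_eq_mul, measureReal_def]
    ring
  · exact (integrable_const _).indicator measurableSet_Ioi
  · exact (integrable_const _).indicator measurableSet_Iio

lemma gp_gbound : ∃ C : ℝ, 0 ≤ C ∧ ∀ (a T : ℝ), 1 ≤ T →
    |∫ t in (1/T:ℝ)..T, Real.sin (a*t) / t| ≤ C := by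
  obtain ⟨C₀, hC₀, hB⟩ := gpS_bound
  have key : ∀ (a T : ℝ), 0 < a → 1 ≤ T → |∫ t in (1/T:ℝ)..T, Real.sin (a*t) / t| ≤ 2*C₀ := by
    intro a T ha hT
    have hT0 : (0:ℝ) < T := lt_of_lt_of_le one_pos hT
    rw [gpS_scale' ha.ne']
    have h1 := hB (a*T) (by positivity)
    have h2 := hB (a*(1/T)) (by positivity)
    calc |gpS (a*T) - gpS (a*(1/T))| ≤ |gpS (a*T)| + |gpS (a*(1/T))| := abs_sub _ _
      _ ≤ 2*C₀ := by linarith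
  refine ⟨2*C₀, by linarith, fun a T hT => ?_⟩
  rcases lt_trichotomy 0 a with h | h | h
  · exact key a T h hT
  · simp only [← h, zero_mul, Real.sin_zero, zero_div, intervalIntegral.integral_zero, abs_zero]
    linarith
  · rw [gp_neg_case, abs_neg]
    exact key (-a) T (by linarith) hT

lemma gp_phi_im (μ : Measure ℝ) [IsProbabilityMeasure μ]
    (φ : ℝ → ℂ) (hφ : ∀ t : ℝ, φ t = ∫ x : ℝ, Complex.exp (Complex.I * t * x) ∂μ)
    (x t : ℝ) :
    (Complex.exp (-(Complex.I * t * x)) * φ t).im = ∫ y, Real.sin ((y-x)*t) ∂μ := by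
  rw [hφ t, ← MeasureTheory.integral_const_mul]
  have hmeas : AEStronglyMeasurable
      (fun y : ℝ => Complex.exp (-(Complex.I*t*x)) * Complex.exp (Complex.I*t*y)) μ := by
    apply Continuous.aestronglyMeasurable
    exact continuous_const.mul (Complex.continuous_exp.comp (by continuity))
  have hInt : Integrable
      (fun y : ℝ => Complex.exp (-(Complex.I*t*x)) * Complex.exp (Complex.I*t*y)) μ := by
    refine Integrable.mono' (integrable_const 1) hmeas ?_
    filter_upwards with y
    rw [← Complex.exp_add]
    have : (-(Complex.I*t*x) + Complex.I*t*y) = ((t*(y-x) : ℝ) : ℂ) * Complex.I := by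
      push_cast; ring
    rw [this]
    rw [Complex.norm_exp_ofReal_mul_I]
  have him := Complex.imCLM.integral_comp_comm hInt
  simp only [Complex.imCLM_apply] at him
  rw [← him]
  congr 1
  ext y
  rw [← Complex.exp_add]
  have : (-(Complex.I*t*x) + Complex.I*t*y) = (((y-x)*t : ℝ) : ℂ) * Complex.I := by
    push_cast; ring
  rw [this]
  simpa using Complex.exp_ofReal_mul_I_im ((y-x)*t)

/-- Gil-Pelaez inversion theorem: for a probability measure on ℝ with characteristic
function φ and cumulative distribution function F, at every continuity point x of F,
`F x = 1/2 - (1/π) · lim_{T→∞} ∫_{1/T}^{T} Im(e^{-itx} φ(t))/t dt`, i.e. the truncated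
integral tends to `π (1/2 - F x)`. -/
theorem gil_pelaez_inversion
    (μ : Measure ℝ) [IsProbabilityMeasure μ]
    (φ : ℝ → ℂ) (hφ : ∀ t : ℝ, φ t = ∫ x : ℝ, Complex.exp (Complex.I * t * x) ∂μ)
    (F : ℝ → ℝ) (hF : ∀ x : ℝ, F x = (μ (Iic x)).toReal)
    (x : ℝ) (hcont : ContinuousAt F x) :
    Tendsto (fun T : ℝ => ∫ t in Icc (1 / T) T,
        (Complex.exp (-(Complex.I * t * x)) * φ t).im / t)
      atTop (nhds (π * (1 / 2 - F x))) := by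
  -- value of the limit
  obtain ⟨hIio, hIoi⟩ := gp_cdf_facts μ F hF x hcont
  have hval : ∫ y, gpsgn (y - x) ∂μ = π * (1/2 - F x) := by
    rw [gp_sgn_integral μ x, hIio, hIoi]; ring
  -- product integrability for each T ≥ 1
  have hprodmeas : Measurable (fun p : ℝ × ℝ => Real.sin ((p.2 - x) * p.1) / p.1) := by
    apply Measurable.div _ measurable_fst
    exact Real.measurable_sin.comp (((measurable_snd.sub measurable_const)).mul measurable_fst)
  have hprod : ∀ T : ℝ, 1 ≤ T →
      Integrable (fun p : ℝ × ℝ => Real.sin ((p.2 - x) * p.1) / p.1)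
        ((volume.restrict (Ioc (1/T) T)).prod μ) := by
    intro T hT
    have hT0 : (0:ℝ) < T := lt_of_lt_of_le one_pos hT
    refine Integrable.mono' (integrable_const T) hprodmeas.aestronglyMeasurable ?_
    rw [← Measure.restrict_univ (μ := μ), Measure.prod_restrict]
    filter_upwards [ae_restrict_mem (measurableSet_Ioc.prod MeasurableSet.univ)] with p hp
    have hp1 : 1/T < p.1 := hp.1.1
    have hp0 : 0 < p.1 := lt_trans (by positivity) hp1
    rw [Real.norm_eq_abs, abs_div, abs_of_pos hp0, div_le_iff₀ hp0]
    calc |Real.sin ((p.2 - x) * p.1)| ≤ 1 := Real.abs_sin_le_one _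
      _ ≤ T * p.1 := by
          rw [← div_le_iff₀' hT0]
          exact le_of_lt (lt_of_le_of_lt (by rw [one_div]) hp1)
  -- Fubini: identify the truncated integral with ∫ G T y dμ for T ≥ 1
  have hfub : ∀ T : ℝ, 1 ≤ T →
      (∫ t in Icc (1/T) T, (Complex.exp (-(Complex.I * t * x)) * φ t).im / t)
        = ∫ y, (∫ t in (1/T:ℝ)..T, Real.sin ((y-x)*t) / t) ∂μ := by
    intro T hT
    have hT0 : (0:ℝ) < T := lt_of_lt_of_le one_pos hT
    have hle : 1/T ≤ T := by
      rw [div_le_iff₀ hT0]; nlinarith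
    rw [MeasureTheory.integral_Icc_eq_integral_Ioc]
    have h1 : ∀ t ∈ Ioc (1/T) T,
        (Complex.exp (-(Complex.I * t * x)) * φ t).im / t
          = ∫ y, Real.sin ((y-x)*t) / t ∂μ := by
      intro t ht
      rw [gp_phi_im μ φ hφ x t, ← MeasureTheory.integral_div]
    rw [setIntegral_congr_ae measurableSet_Ioc (by filter_upwards with t ht; exact h1 t ht)]
    have hswap := MeasureTheory.integral_integral_swap
      (f := fun t y : ℝ => Real.sin ((y-x)*t) / t)
      (μ := volume.restrict (Ioc (1/T) T)) (ν := μ) (hprod T hT)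
    rw [hswap]
    refine MeasureTheory.integral_congr_ae ?_
    filter_upwards with y
    rw [intervalIntegral.integral_of_le hle]
  -- dominated convergence
  obtain ⟨C, hC0, hC⟩ := gp_gbound
  have hDCT : Tendsto (fun T : ℝ => ∫ y, (∫ t in (1/T:ℝ)..T, Real.sin ((y-x)*t) / t) ∂μ)
      atTop (𝓝 (∫ y, gpsgn (y - x) ∂μ)) := by
    refine MeasureTheory.tendsto_integral_filter_of_dominated_convergence
      (bound := fun _ => C) ?_ ?_ (integrable_const C) ?_
    · filter_upwards [eventually_ge_atTop (1:ℝ)] with T hT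
      have hT0 : (0:ℝ) < T := lt_of_lt_of_le one_pos hT
      have hle : 1/T ≤ T := by rw [div_le_iff₀ hT0]; nlinarith
      have haux : AEStronglyMeasurable
          (fun y : ℝ => ∫ t, Real.sin ((y-x)*t) / t ∂(volume.restrict (Ioc (1/T) T))) μ := by
        have hm : AEStronglyMeasurable (fun p : ℝ × ℝ => Real.sin ((p.1 - x) * p.2) / p.2)
            (μ.prod (volume.restrict (Ioc (1/T) T))) := by
          apply Measurable.aestronglyMeasurable
          apply Measurable.div _ measurable_snd
          exact Real.measurable_sin.comp ((measurable_fst.sub measurable_const).mul measurable_snd)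
        exact hm.integral_prod_right'
      refine haux.congr ?_
      filter_upwards with y
      rw [intervalIntegral.integral_of_le hle]
    · filter_upwards [eventually_ge_atTop (1:ℝ)] with T hT
      filter_upwards with y
      rw [Real.norm_eq_abs]
      exact hC (y-x) T hT
    · filter_upwards with y
      exact gp_glimit (y - x)
  rw [← hval]
  refine Tendsto.congr' ?_ hDCT
  filter_upwards [eventually_ge_atTop (1:ℝ)] with T hT
  exact (hfub T hT).symm
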